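/- Let a, b be real numbers with 0 < a < 1, b·(1−b) ≥ 0 and (2a−b)·(1−2a+b) ≥ 0. Then √(b·(1−b)/(a·(1−a))) + √((2a−b)·(1−2a+b)/(a·(1−a))) ≤ 2·√(1 − (a−b)²/(a·(1−a))); moreover, if b ≠ a then the left-hand side is strictly less than 2. -/

import Mathlib

open Real

/-- the ζ bound. -/
theorem zeta_bound (a b : ℝ) (ha0 : 0 < a) (ha1 : a < 1)
    (hb : 0 ≤ b * (1 - b)) (hb' : 0 ≤ (2 * a - b) * (1 - 2 * a + b)) :
    Real.sqrt (b * (1 - b) / (a * (1 - a))) +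
      Real.sqrt ((2 * a - b) * (1 - 2 * a + b) / (a * (1 - a))) ≤
      2 * Real.sqrt (1 - (a - b) ^ 2 / (a * (1 - a))) ∧
    (b ≠ a →
      Real.sqrt (b * (1 - b) / (a * (1 - a))) +
        Real.sqrt ((2 * a - b) * (1 - 2 * a + b) / (a * (1 - a))) < 2) := by
  have hD : 0 < a * (1 - a) := mul_pos ha0 (by linarith)
  set x := b * (1 - b) / (a * (1 - a)) with hxdef
  set y := (2 * a - b) * (1 - 2 * a + b) / (a * (1 - a)) with hydef
  set s := 1 - (a - b) ^ 2 / (a * (1 - a)) with hsdef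
  have hx : 0 ≤ x := div_nonneg hb hD.le
  have hy : 0 ≤ y := div_nonneg hb' hD.le
  have hkey : x + y = 2 * s := by
    rw [hxdef, hydef, hsdef]
    field_simp [ha0.ne', sub_ne_zero.mpr ha1.ne']
    ring
  have hs : 0 ≤ s := by linarith
  have hsx : Real.sqrt x ^ 2 = x := Real.sq_sqrt hx
  have hsy : Real.sqrt y ^ 2 = y := Real.sq_sqrt hy
  have hsq : (Real.sqrt x + Real.sqrt y) ^ 2 ≤ 4 * s := by
    nlinarith [sq_nonneg (Real.sqrt x - Real.sqrt y)]
  have hmain : Real.sqrt x + Real.sqrt y ≤ 2 * Real.sqrt s := by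
    calc Real.sqrt x + Real.sqrt y
        = Real.sqrt ((Real.sqrt x + Real.sqrt y) ^ 2) :=
          (Real.sqrt_sq (by positivity)).symm
      _ ≤ Real.sqrt (4 * s) := Real.sqrt_le_sqrt hsq
      _ = 2 * Real.sqrt s := by
          rw [show (4 : ℝ) * s = 2 ^ 2 * s by ring, Real.sqrt_mul (by positivity),
            Real.sqrt_sq (by norm_num)]
  refine ⟨hmain, fun hne => ?_⟩
  have hab : a - b ≠ 0 := sub_ne_zero.mpr (Ne.symm hne)
  have hpos : 0 < (a - b) ^ 2 / (a * (1 - a)) := div_pos (by positivity) hD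
  have hs1 : s < 1 := by rw [hsdef]; linarith
  have : Real.sqrt s < 1 := by
    have := Real.sqrt_lt_sqrt hs hs1
    simpa using this
  linarith
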